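/- Let F be a finitely generated module over a principal ideal domain R. Then F decomposes as the direct sum of its torsion submodule and a free module isomorphic to the double dual Hom_R(Hom_R(F,R),R). -/

import Mathlib

/-- A finitely generated module `F` over a principal ideal domain `R` decomposes
as the direct sum of its torsion submodule and a free module isomorphic to the
double dual `Hom_R(Hom_R(F,R),R)`. -/
theorem stmt_2 (R : Type*) [CommRing R] [IsDomain R] [IsPrincipalIdealRing R]
    (F : Type*) [AddCommGroup F] [Module R F] [Module.Finite R F] :
    Module.Free R (Module.Dual R (Module.Dual R F)) ∧
    Nonempty (F ≃ₗ[R] (Submodule.torsion R F) × Module.Dual R (Module.Dual R F)) := by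
  set T := Submodule.torsion R F
  set Q := F ⧸ T
  haveI : Module.Finite R Q := Module.Finite.of_surjective _ T.mkQ_surjective
  haveI : Module.Free R Q := Module.free_of_finite_type_torsion_free'
  -- Dual of the quotient map is bijective
  have hbij : Function.Bijective (T.mkQ.dualMap) := by
    refine ⟨LinearMap.dualMap_injective_of_surjective T.mkQ_surjective, ?_⟩
    intro f
    have hT : T ≤ LinearMap.ker f := by
      rintro x ⟨⟨a, ha⟩, hax⟩
      have h1 : a • f x = 0 := by
        have : f ((⟨a, ha⟩ : nonZeroDivisors R) • x) = 0 := by rw [hax, map_zero]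
        simpa using this
      have ha' : a ≠ 0 := nonZeroDivisors.ne_zero ha
      exact (smul_eq_zero.mp h1).resolve_left ha'
    exact ⟨T.liftQ f hT, by ext x; simp⟩
  let e1 : Module.Dual R Q ≃ₗ[R] Module.Dual R F := LinearEquiv.ofBijective _ hbij
  let e2 : Module.Dual R (Module.Dual R F) ≃ₗ[R] Module.Dual R (Module.Dual R Q) :=
    e1.dualMap
  let e3 : Q ≃ₗ[R] Module.Dual R (Module.Dual R F) :=
    (Module.evalEquiv R Q).trans e2.symm
  refine ⟨Module.Free.of_equiv e3, ?_⟩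
  -- split the exact sequence 0 → T → F → Q → 0
  haveI : Module.Projective R Q := inferInstance
  obtain ⟨f, hf⟩ := Module.projective_lifting_property _ LinearMap.id T.mkQ_surjective
  exact ⟨(lequivProdOfRightSplitExact T.injective_subtype
      (by rw [Submodule.range_subtype, Submodule.ker_mkQ]) hf).symm.trans
      ((LinearEquiv.refl R T).prodCongr e3)⟩
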